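/- Let r ≥ 1, let V ⊆ ℂ be a nonempty open connected set, and let U ⊆ ℂ^r (i.e. U ⊆ (Fin r → ℂ)) be a nonempty open connected set. Let f : ℂ × ℂ^r → ℂ be analytic on the product set V × U. Suppose that for every t ∈ U the function x ↦ f(x,t) is rational on V, i.e. there exist polynomials p, q ∈ ℂ[X] with q ≠ 0 such that q(x)·f(x,t) = p(x) for all x ∈ V. Then the degrees can be bounded uniformly: there exists m ∈ ℕ such that for every t ∈ U one can choose polynomials p, q ∈ ℂ[X] with q ≠ 0, deg p ≤ m, deg q ≤ m, and q(x)·f(x,t) = p(x) for all x ∈ V. -/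

import Mathlib

set_option maxRecDepth 8000
open Polynomial


/-- The polynomial with coefficients `w`. -/
noncomputable def polyOf {n : ℕ} (w : Fin n → ℂ) : Polynomial ℂ :=
  ∑ j : Fin n, C (w j) * X ^ (j : ℕ)

lemma polyOf_coeff {n : ℕ} (w : Fin n → ℂ) (j : Fin n) :
    (polyOf w).coeff j = w j := by
  rw [polyOf, finset_sum_coeff]
  rw [Finset.sum_eq_single j]
  · simp
  · intro b _ hb
    simp only [coeff_C_mul, coeff_X_pow]
    rw [if_neg, mul_zero]
    intro h
    exact hb (Fin.ext h.symm)
  · simp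

lemma polyOf_eval {n : ℕ} (w : Fin n → ℂ) (x : ℂ) :
    (polyOf w).eval x = ∑ j : Fin n, w j * x ^ (j : ℕ) := by
  simp [polyOf, eval_finset_sum]

lemma polyOf_natDegree_le {n m : ℕ} (w : Fin n → ℂ) (h : n ≤ m + 1) :
    (polyOf w).natDegree ≤ m := by
  apply natDegree_sum_le_of_forall_le
  intro j _
  refine (natDegree_C_mul_le _ _).trans ?_
  rw [natDegree_X_pow]
  omega

lemma polyOf_ne_zero {n : ℕ} {w : Fin n → ℂ} (h : w ≠ 0) : polyOf w ≠ 0 := by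
  intro h0
  apply h
  funext j
  have := polyOf_coeff w j
  rw [h0, coeff_zero] at this
  exact this.symm

lemma open_infinite {V : Set ℂ} (hV : IsOpen V) (hne : V.Nonempty) : V.Infinite := by
  obtain ⟨x₀, hx₀⟩ := hne
  obtain ⟨δ, hδ, hball⟩ := Metric.isOpen_iff.mp hV x₀ hx₀
  apply Set.infinite_of_injective_forall_mem
    (f := fun n : ℕ => x₀ + (δ / (n + 2) : ℝ))
  · intro a b hab
    have h : (δ / ((a:ℝ)+2)) = δ / ((b:ℝ)+2) := by
      exact_mod_cast add_left_cancel hab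
    have ha : (0:ℝ) < δ := hδ
    have hane : ((a:ℝ)+2) ≠ 0 := by positivity
    have hbne : ((b:ℝ)+2) ≠ 0 := by positivity
    rw [div_eq_div_iff hane hbne] at h
    have h2 : ((b:ℝ) + 2) = (a:ℝ) + 2 := mul_left_cancel₀ (ne_of_gt ha) h
    have : (a:ℝ) = b := by linarith
    exact_mod_cast this
  · intro n
    apply hball
    simp only [Metric.mem_ball, Complex.dist_eq, add_sub_cancel_left]
    rw [Complex.norm_real, Real.norm_eq_abs, abs_of_pos (by positivity)]
    rw [div_lt_iff₀ (by positivity)]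
    nlinarith [hδ]


lemma exists_kernel_vector {ι : Type*} {k : ℕ} (v : ι → Fin k → ℂ)
    (hdet : ∀ xs : Fin k → ι, (Matrix.of fun i j => v (xs i) j).det = 0) :
    ∃ u : Fin k → ℂ, u ≠ 0 ∧ ∀ i, ∑ j, v i j * u j = 0 := by
  by_cases htop : Submodule.span ℂ (Set.range v) = ⊤
  · exfalso
    obtain ⟨b, hb_sub, hb_span, hb_li⟩ := exists_linearIndependent ℂ (Set.range v)
    let B : Module.Basis b ℂ (Fin k → ℂ) := Module.Basis.mk hb_li
      (by rw [Subtype.range_coe, hb_span, htop])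
    haveI : Fintype b := FiniteDimensional.fintypeBasisIndex B
    have hcard : Fintype.card b = k := by
      have := Module.finrank_eq_card_basis B
      rw [Module.finrank_fintype_fun_eq_card, Fintype.card_fin] at this
      exact this.symm
    let e : Fin k ≃ b := (Fintype.equivFinOfCardEq hcard).symm
    have hchoose : ∀ i : Fin k, ∃ x : ι, v x = (e i : Fin k → ℂ) := fun i =>
      hb_sub (e i).2
    choose xs hxs using hchoose
    have hli : LinearIndependent ℂ (fun i : Fin k => v (xs i)) := by
      have : (fun i : Fin k => v (xs i)) = (fun (y : b) => (y : Fin k → ℂ)) ∘ e := by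
        funext i; simp [hxs]
      rw [this]
      exact hb_li.comp e e.injective
    obtain ⟨w, hw0, hw⟩ := Matrix.exists_vecMul_eq_zero_iff.mpr (hdet xs)
    have := Fintype.linearIndependent_iff.mp hli w ?_
    · exact hw0 (funext this)
    · funext j
      have := congrFun hw j
      simpa [Matrix.vecMul, dotProduct, Finset.sum_apply] using this
  · have hx : ∃ x, x ∉ Submodule.span ℂ (Set.range v) := by
      by_contra h
      push_neg at h
      exact htop (Submodule.eq_top_iff'.mpr h)
    obtain ⟨x, hx⟩ := hx
    obtain ⟨φ, hφ1, hφ⟩ := Submodule.exists_dual_map_eq_bot_of_notMem hx inferInstance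
    refine ⟨fun j => φ (Pi.single j (1 : ℂ)), ?_, ?_⟩
    · intro h0
      have hzero : φ x = 0 := by
        have hxsum : x = ∑ j, x j • (Pi.single j (1 : ℂ) : Fin k → ℂ) := by
          funext j; simp [Pi.single_apply]
        rw [hxsum, map_sum]
        simp only [map_smul]
        have : ∀ j : Fin k, φ (Pi.single j (1 : ℂ)) = 0 := fun j => congrFun h0 j
        simp [this]
      exact hφ1 hzero
    · intro i
      have hv : φ (v i) = 0 := by
        have hmem : v i ∈ Submodule.span ℂ (Set.range v) :=
          Submodule.subset_span ⟨i, rfl⟩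
        have := Submodule.mem_map_of_mem (f := φ) hmem
        rw [hφ] at this
        simpa using this
      have hvsum : v i = ∑ j, v i j • (Pi.single j (1 : ℂ) : Fin k → ℂ) := by
        funext j; simp [Pi.single_apply]
      rw [hvsum, map_sum] at hv
      simp only [map_smul, smul_eq_mul] at hv
      exact hv



/-- Palais-type lemma, analytic core: a function `f(x,t)`, analytic
jointly on `V × U ⊆ ℂ × ℂ^r`, which for each fixed `t ∈ U` is a rational function
of `x` on `V`, is a quotient of polynomials in `x` of uniformly bounded degree. -/
theorem uniform_degree_bound_of_pointwise_rational
    (r : ℕ) (hr : 1 ≤ r)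
    (V : Set ℂ) (hVne : V.Nonempty) (hVopen : IsOpen V) (hVconn : IsConnected V)
    (U : Set (Fin r → ℂ)) (hUne : U.Nonempty) (hUopen : IsOpen U)
    (hUconn : IsConnected U)
    (f : ℂ × (Fin r → ℂ) → ℂ)
    (hf : AnalyticOn ℂ f (V ×ˢ U))
    (hrat : ∀ t ∈ U, ∃ p q : Polynomial ℂ, q ≠ 0 ∧
      ∀ x ∈ V, q.eval x * f (x, t) = p.eval x) :
    ∃ m : ℕ, ∀ t ∈ U, ∃ p q : Polynomial ℂ, q ≠ 0 ∧
      p.natDegree ≤ m ∧ q.natDegree ≤ m ∧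
      ∀ x ∈ V, q.eval x * f (x, t) = p.eval x := by
  classical
  have hVUopen : IsOpen (V ×ˢ U) := hVopen.prod hUopen
  have hfN : AnalyticOnNhd ℂ f (V ×ˢ U) := (hVUopen.analyticOn_iff_analyticOnNhd).mp hf
  have hfc : ContinuousOn f (V ×ˢ U) := hf.continuousOn
  have hVinf : V.Infinite := open_infinite hVopen hVne
  -- the degree-bounded rationality predicate
  set Z : ℕ → (Fin r → ℂ) → Prop := fun m t => ∃ p q : Polynomial ℂ, q ≠ 0 ∧
      p.natDegree ≤ m ∧ q.natDegree ≤ m ∧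
      ∀ x ∈ V, q.eval x * f (x, t) = p.eval x with hZdef
  -- interpolation nodes
  have hnodes : ∀ m : ℕ, ∃ s : Finset ℂ, ↑s ⊆ V ∧ s.card = m + 1 :=
    fun m => hVinf.exists_subset_card_eq (m+1)
  choose nodes hnodesV hnodescard using hnodes
  -- Step 1 : Baire category gives an open set where the degree is bounded
  have step1 : ∃ (m : ℕ) (W : Set (Fin r → ℂ)), IsOpen W ∧ W.Nonempty ∧ W ⊆ U ∧
      ∀ t ∈ W, Z m t := by
    obtain ⟨t₀, ht₀⟩ := hUne
    obtain ⟨ε, hε, hballU⟩ := Metric.isOpen_iff.mp hUopen t₀ ht₀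
    set B : Set (Fin r → ℂ) := Metric.closedBall t₀ (ε/2) with hBdef
    have hBU : B ⊆ U := (Metric.closedBall_subset_ball (by linarith)).trans hballU
    haveI : CompactSpace ↥B := isCompact_iff_compactSpace.mp (isCompact_closedBall _ _)
    haveI : Nonempty ↥B := ⟨⟨t₀, Metric.mem_closedBall_self (by linarith)⟩⟩
    set F : ℕ → Set ↥B := fun m => {t : ↥B | ∃ c : Fin (m+1) → ℂ, ‖c‖ = 1 ∧ ∀ x ∈ V,
      (∑ j : Fin (m+1), c j * x ^ (j:ℕ)) * f (x, (t : Fin r → ℂ)) =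
      ∑ i ∈ nodes m, ((∑ j : Fin (m+1), c j * i ^ (j:ℕ)) * f (i, (t : Fin r → ℂ))) *
        (Lagrange.basis (nodes m) id i).eval x} with hFdef
    -- each F m is closed
    have hFclosed : ∀ m : ℕ, IsClosed (F m) := by
      intro m
      have hset : F m = Prod.snd ''
          {ct : ↥(Metric.sphere (0 : Fin (m+1) → ℂ) 1) × ↥B | ∀ x ∈ V,
            (∑ j : Fin (m+1), (ct.1 : Fin (m+1) → ℂ) j * x ^ (j:ℕ)) * f (x, (ct.2 : Fin r → ℂ)) =
            ∑ i ∈ nodes m, ((∑ j : Fin (m+1), (ct.1 : Fin (m+1) → ℂ) j * i ^ (j:ℕ)) *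
              f (i, (ct.2 : Fin r → ℂ))) * (Lagrange.basis (nodes m) id i).eval x} := by
        ext t
        constructor
        · rintro ⟨c, hc1, hc⟩
          exact ⟨(⟨c, by simpa [mem_sphere_iff_norm] using hc1⟩, t), hc, rfl⟩
        · rintro ⟨⟨c, t'⟩, hct, rfl⟩
          exact ⟨(c : Fin (m+1) → ℂ), by simpa [mem_sphere_iff_norm] using c.2, hct⟩
      rw [hset]
      apply isClosedMap_snd_of_compactSpace
      have heq : {ct : ↥(Metric.sphere (0 : Fin (m+1) → ℂ) 1) × ↥B | ∀ x ∈ V,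
            (∑ j : Fin (m+1), (ct.1 : Fin (m+1) → ℂ) j * x ^ (j:ℕ)) * f (x, (ct.2 : Fin r → ℂ)) =
            ∑ i ∈ nodes m, ((∑ j : Fin (m+1), (ct.1 : Fin (m+1) → ℂ) j * i ^ (j:ℕ)) *
              f (i, (ct.2 : Fin r → ℂ))) * (Lagrange.basis (nodes m) id i).eval x} =
          ⋂ x ∈ V, {ct : ↥(Metric.sphere (0 : Fin (m+1) → ℂ) 1) × ↥B |
            (∑ j : Fin (m+1), (ct.1 : Fin (m+1) → ℂ) j * x ^ (j:ℕ)) * f (x, (ct.2 : Fin r → ℂ)) =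
            ∑ i ∈ nodes m, ((∑ j : Fin (m+1), (ct.1 : Fin (m+1) → ℂ) j * i ^ (j:ℕ)) *
              f (i, (ct.2 : Fin r → ℂ))) * (Lagrange.basis (nodes m) id i).eval x} := by
        ext ct
        exact ⟨fun h => Set.mem_iInter₂.mpr h, fun h => Set.mem_iInter₂.mp h⟩
      rw [heq]
      refine isClosed_biInter (fun x hx => isClosed_eq ?_ ?_)
      · refine Continuous.mul ?_ ?_
        · exact continuous_finset_sum _ (fun j _ =>
            ((continuous_apply j).comp (continuous_subtype_val.comp continuous_fst)).mul
              continuous_const)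
        · exact hfc.comp_continuous
            (continuous_const.prodMk (continuous_subtype_val.comp continuous_snd))
            (fun ct => Set.mk_mem_prod hx (hBU ct.2.2))
      · refine continuous_finset_sum _ (fun i hi => Continuous.mul (Continuous.mul ?_ ?_)
          continuous_const)
        · exact continuous_finset_sum _ (fun j _ =>
            ((continuous_apply j).comp (continuous_subtype_val.comp continuous_fst)).mul
              continuous_const)
        · exact hfc.comp_continuous
            (continuous_const.prodMk (continuous_subtype_val.comp continuous_snd))
            (fun ct => Set.mk_mem_prod (hnodesV m hi) (hBU ct.2.2))
    -- the F m cover U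
    have hFcover : ∀ t : ↥B, ∃ m : ℕ, t ∈ F m := by
      intro t
      obtain ⟨p, q, hq, hpq⟩ := hrat (t : Fin r → ℂ) (hBU t.2)
      refine ⟨max p.natDegree q.natDegree, ?_⟩
      set M := max p.natDegree q.natDegree with hM
      set cv : Fin (M+1) → ℂ := fun j => q.coeff j with hcv
      have hcv0 : cv ≠ 0 := by
        intro h
        apply leadingCoeff_ne_zero.mpr hq
        rw [leadingCoeff]
        exact congrFun h ⟨q.natDegree, Nat.lt_succ_of_le (le_max_right _ _)⟩
      have hnc : ‖cv‖ ≠ 0 := norm_ne_zero_iff.mpr hcv0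
      refine ⟨‖cv‖⁻¹ • cv, ?_, ?_⟩
      · rw [norm_smul, norm_inv, norm_norm, inv_mul_cancel₀ hnc]
      · intro x hx
        have hqe : ∀ y : ℂ, (∑ j : Fin (M+1), (‖cv‖⁻¹ • cv) j * y ^ (j:ℕ)) =
            ((‖cv‖⁻¹ : ℝ) : ℂ) * q.eval y := by
          intro y
          rw [eval_eq_sum_range' (by omega : q.natDegree < M + 1) y,
            ← Fin.sum_univ_eq_sum_range, Finset.mul_sum]
          refine Finset.sum_congr rfl (fun j _ => ?_)
          simp only [Pi.smul_apply, hcv, Complex.real_smul]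
          ring
        -- the interpolation identity for p
        have hinterp : ∀ y : ℂ, ∑ i ∈ nodes M, p.eval i *
            (Lagrange.basis (nodes M) id i).eval y = p.eval y := by
          intro y
          have hdeg : p.degree < (nodes M).card := by
            rw [hnodescard M]
            rcases eq_or_ne p 0 with hp | hp
            · rw [hp, degree_zero]
              exact WithBot.bot_lt_coe _
            · rw [degree_eq_natDegree hp]
              exact_mod_cast Nat.lt_succ_of_le (le_max_left _ _)
          have := Lagrange.eq_interpolate (Set.injOn_id _) hdeg
          conv_rhs => rw [this]
          rw [Lagrange.interpolate_apply, eval_finset_sum]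
          exact Finset.sum_congr rfl (fun i _ => by rw [eval_mul, eval_C, id])
        have hRHS : ∀ i ∈ nodes M,
            ((∑ j : Fin (M+1), (‖cv‖⁻¹ • cv) j * i ^ (j:ℕ)) * f (i, (t : Fin r → ℂ))) *
              (Lagrange.basis (nodes M) id i).eval x =
            ((‖cv‖⁻¹ : ℝ) : ℂ) * (p.eval i * (Lagrange.basis (nodes M) id i).eval x) := by
          intro i hi
          rw [hqe i]
          have h := hpq i (hnodesV M hi)
          linear_combination ((‖cv‖⁻¹ : ℝ) : ℂ) * (Lagrange.basis (nodes M) id i).eval x * h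
        rw [hqe x, Finset.sum_congr rfl hRHS, ← Finset.mul_sum, hinterp x]
        linear_combination ((‖cv‖⁻¹ : ℝ) : ℂ) * (hpq x hx)
    -- Baire category
    obtain ⟨m, hm⟩ := nonempty_interior_of_iUnion_of_closed hFclosed
      (Set.eq_univ_iff_forall.mpr fun t => Set.mem_iUnion.mpr (hFcover t))
    obtain ⟨th, hth⟩ := hm
    obtain ⟨O, hOopen, hOpre⟩ := isOpen_induced_iff.mp (isOpen_interior (s := F m))
    have hthO : (th : Fin r → ℂ) ∈ O := by
      have : th ∈ Subtype.val ⁻¹' O := by rw [hOpre]; exact hth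
      exact this
    -- O meets the open ball since th is in the closure of the ball
    have hcl : (th : Fin r → ℂ) ∈ closure (Metric.ball t₀ (ε/2)) := by
      rw [closure_ball t₀ (by positivity : ε/2 ≠ 0)]
      exact th.2
    obtain ⟨t₁, ht₁O, ht₁ball⟩ := _root_.mem_closure_iff.mp hcl O hOopen hthO
    refine ⟨m, O ∩ Metric.ball t₀ (ε/2), hOopen.inter Metric.isOpen_ball,
      ⟨t₁, ht₁O, ht₁ball⟩, ?_, ?_⟩
    · exact fun x hx => hBU (Metric.ball_subset_closedBall hx.2)
    · rintro x ⟨hxO, hxball⟩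
      have hxB : x ∈ B := Metric.ball_subset_closedBall hxball
      have hmem : (⟨x, hxB⟩ : ↥B) ∈ F m := by
        apply interior_subset
        rw [← hOpre]
        exact hxO
      obtain ⟨c, hc1, hc⟩ := hmem
      have hcne : c ≠ 0 := by
        intro h0
        rw [h0, norm_zero] at hc1
        exact one_ne_zero hc1.symm
      refine ⟨Lagrange.interpolate (nodes m) id
          (fun i => (∑ j : Fin (m+1), c j * i ^ (j:ℕ)) * f (i, x)),
        polyOf c, polyOf_ne_zero hcne, ?_, polyOf_natDegree_le _ le_rfl, ?_⟩
      · set pp := Lagrange.interpolate (nodes m) id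
          (fun i => (∑ j : Fin (m+1), c j * i ^ (j:ℕ)) * f (i, x)) with hpp
        have hdeg : pp.degree < ((m+1 : ℕ) : WithBot ℕ) := by
          rw [← hnodescard m]
          exact Lagrange.degree_interpolate_lt _ (Set.injOn_id _)
        rcases eq_or_ne pp 0 with hp0 | hp0
        · rw [hp0]; simp
        · have := (natDegree_lt_iff_degree_lt hp0).mpr hdeg
          omega
      · intro y hy
        rw [polyOf_eval]
        rw [hc y hy, Lagrange.interpolate_apply, eval_finset_sum]
        exact Finset.sum_congr rfl (fun i _ => by rw [eval_mul, eval_C])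
  obtain ⟨m, W, hWopen, hWne, hWU, hWZ⟩ := step1
  -- Step 2 : propagate to all of U by analytic continuation of determinants
  refine ⟨m, fun t ht => ?_⟩
  -- the matrix size
  set k := (m + 1) + (m + 1) with hkdef
  set S : Set (Fin k → ℂ) := Set.univ.pi (fun _ => V) with hSdef
  set Ω : Set ((Fin k → ℂ) × (Fin r → ℂ)) := S ×ˢ U with hΩdef
  set ent : Fin k → Fin k → ((Fin k → ℂ) × (Fin r → ℂ)) → ℂ := fun i j z =>
    Fin.addCases (motive := fun _ => ℂ) (fun j₁ : Fin (m+1) => z.1 i ^ (j₁ : ℕ))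
      (fun j₂ : Fin (m+1) => f (z.1 i, z.2) * z.1 i ^ (j₂ : ℕ)) j with hentdef
  set D : ((Fin k → ℂ) × (Fin r → ℂ)) → ℂ := fun z =>
    (Matrix.of (fun i j => ent i j z)).det with hDdef
  have hΩopen : IsOpen Ω := (isOpen_set_pi Set.finite_univ (fun i _ => hVopen)).prod hUopen
  have hΩconn : IsPreconnected Ω :=
    (isPreconnected_univ_pi (fun i => hVconn.isPreconnected)).prod hUconn.isPreconnected
  have hxA : ∀ i : Fin k, AnalyticOnNhd ℂ (fun z : (Fin k → ℂ) × (Fin r → ℂ) => z.1 i) Ω :=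
    fun i => ((ContinuousLinearMap.proj i).comp
      (ContinuousLinearMap.fst ℂ (Fin k → ℂ) (Fin r → ℂ))).analyticOnNhd Ω
  have hfA : ∀ i : Fin k, AnalyticOnNhd ℂ
      (fun z : (Fin k → ℂ) × (Fin r → ℂ) => f (z.1 i, z.2)) Ω := by
    intro i
    have hL : AnalyticOnNhd ℂ (fun z : (Fin k → ℂ) × (Fin r → ℂ) => ((z.1 i, z.2) : ℂ × (Fin r → ℂ))) Ω :=
      (((ContinuousLinearMap.proj i).comp
        (ContinuousLinearMap.fst ℂ (Fin k → ℂ) (Fin r → ℂ))).prod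
        (ContinuousLinearMap.snd ℂ (Fin k → ℂ) (Fin r → ℂ))).analyticOnNhd Ω
    exact hfN.comp hL (fun z hz => ⟨(Set.mem_pi.mp hz.1) i (Set.mem_univ i), hz.2⟩)
  have hentA : ∀ i j : Fin k, AnalyticOnNhd ℂ (ent i j) Ω := by
    intro i j
    refine Fin.addCases (motive := fun j => AnalyticOnNhd ℂ (ent i j) Ω)
      (fun j₁ => ?_) (fun j₂ => ?_) j
    · simp only [hentdef, Fin.addCases_left]
      exact (hxA i).pow _
    · simp only [hentdef, Fin.addCases_right]
      exact (hfA i).mul ((hxA i).pow _)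
  have hDA : AnalyticOnNhd ℂ D Ω := by
    have hD : D = fun z => ∑ σ : Equiv.Perm (Fin k),
        ((Equiv.Perm.sign σ : ℤ) : ℂ) * ∏ i, ent (σ i) i z := by
      funext z
      rw [hDdef]
      simp [Matrix.det_apply, Units.smul_def, zsmul_eq_mul]
    rw [hD]
    apply Finset.analyticOnNhd_fun_sum
    intro σ _
    exact analyticOnNhd_const.mul (Finset.analyticOnNhd_fun_prod Finset.univ (fun i _ => hentA (σ i) i))
  -- D vanishes on S ×ˢ W
  have hD0W : ∀ z ∈ S ×ˢ W, D z = 0 := by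
    rintro ⟨xs, s⟩ ⟨hxs, hs⟩
    obtain ⟨p, q, hq, hpdeg, hqdeg, hpq⟩ := hWZ s hs
    rw [hDdef]
    apply Matrix.exists_mulVec_eq_zero_iff.mp
    refine ⟨Fin.addCases (motive := fun _ => ℂ) (fun j₁ : Fin (m+1) => p.coeff j₁)
      (fun j₂ : Fin (m+1) => -q.coeff j₂), ?_, ?_⟩
    · intro h0
      have hcq : q.coeff q.natDegree ≠ 0 := by
        rw [← leadingCoeff]
        exact leadingCoeff_ne_zero.mpr hq
      have := congrFun h0 (Fin.natAdd (m+1) ⟨q.natDegree, by omega⟩)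
      simp only [Fin.addCases_right, Pi.zero_apply, neg_eq_zero] at this
      exact hcq this
    · funext i
      have hxi : xs i ∈ V := Set.mem_pi.mp hxs i (Set.mem_univ i)
      simp only [Matrix.mulVec, dotProduct, Matrix.of_apply, Pi.zero_apply]
      rw [Fin.sum_univ_add]
      simp only [hentdef, Fin.addCases_left, Fin.addCases_right]
      have hpe : p.eval (xs i) = ∑ j₁ : Fin (m+1), p.coeff j₁ * (xs i) ^ (j₁ : ℕ) := by
        rw [eval_eq_sum_range' (by omega : p.natDegree < m + 1),
          ← Fin.sum_univ_eq_sum_range]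
      have hqe : q.eval (xs i) = ∑ j₂ : Fin (m+1), q.coeff j₂ * (xs i) ^ (j₂ : ℕ) := by
        rw [eval_eq_sum_range' (by omega : q.natDegree < m + 1),
          ← Fin.sum_univ_eq_sum_range]
      have hrel := hpq (xs i) hxi
      have h1 : ∑ j₁ : Fin (m+1), (xs i) ^ (j₁ : ℕ) * p.coeff j₁ = p.eval (xs i) := by
        rw [hpe]; exact Finset.sum_congr rfl (fun j _ => by ring)
      have h2 : ∑ j₂ : Fin (m+1), f (xs i, s) * (xs i) ^ (j₂ : ℕ) * (-q.coeff j₂) =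
          -(q.eval (xs i) * f (xs i, s)) := by
        rw [hqe, Finset.sum_mul, ← Finset.sum_neg_distrib]
        exact Finset.sum_congr rfl (fun j _ => by ring)
      rw [h1, h2, hrel]
      ring
  -- hence D vanishes on Ω
  have hD0 : Set.EqOn D 0 Ω := by
    obtain ⟨v₀, hv₀⟩ := hVne
    obtain ⟨t₀, ht₀⟩ := hWne
    have hz₀ : ((fun _ => v₀, t₀) : (Fin k → ℂ) × (Fin r → ℂ)) ∈ S ×ˢ W := by
      exact ⟨Set.mem_pi.mpr (fun i _ => hv₀), ht₀⟩
    have hz₀Ω : ((fun _ => v₀, t₀) : (Fin k → ℂ) × (Fin r → ℂ)) ∈ Ω :=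
      ⟨hz₀.1, hWU hz₀.2⟩
    apply hDA.eqOn_zero_of_preconnected_of_eventuallyEq_zero hΩconn hz₀Ω
    have hmem : S ×ˢ W ∈ nhds ((fun _ => v₀, t₀) : (Fin k → ℂ) × (Fin r → ℂ)) :=
      ((isOpen_set_pi Set.finite_univ (fun i _ => hVopen)).prod hWopen).mem_nhds hz₀
    exact Filter.eventuallyEq_of_mem hmem hD0W
  -- apply the kernel lemma to the rows indexed by V
  set v : ↥V → Fin k → ℂ := fun x j =>
    Fin.addCases (motive := fun _ => ℂ) (fun j₁ : Fin (m+1) => (x : ℂ) ^ (j₁ : ℕ))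
      (fun j₂ : Fin (m+1) => f ((x : ℂ), t) * (x : ℂ) ^ (j₂ : ℕ)) j with hvdef
  have hdet : ∀ xs : Fin k → ↥V, (Matrix.of fun i j => v (xs i) j).det = 0 := by
    intro xs
    have hmem : ((fun i => (xs i : ℂ), t) : (Fin k → ℂ) × (Fin r → ℂ)) ∈ Ω :=
      ⟨Set.mem_pi.mpr (fun i _ => (xs i).2), ht⟩
    have := hD0 hmem
    simpa [hDdef, hvdef, hentdef] using this
  obtain ⟨u, hu0, hker⟩ := exists_kernel_vector v hdet
  set P : Polynomial ℂ := polyOf (fun j₁ : Fin (m+1) => u (Fin.castAdd (m+1) j₁)) with hPdef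
  set Q : Polynomial ℂ := polyOf (fun j₂ : Fin (m+1) => u (Fin.natAdd (m+1) j₂)) with hQdef
  have hPQ : ∀ x ∈ V, P.eval x + f (x, t) * Q.eval x = 0 := by
    intro x hx
    have := hker ⟨x, hx⟩
    rw [Fin.sum_univ_add] at this
    simp only [hvdef, Fin.addCases_left, Fin.addCases_right] at this
    rw [hPdef, hQdef, polyOf_eval, polyOf_eval, Finset.mul_sum]
    rw [← this]
    congr 1
    · exact Finset.sum_congr rfl (fun j _ => by ring)
    · exact Finset.sum_congr rfl (fun j _ => by ring)
  have hQ0 : Q ≠ 0 := by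
    intro hQ
    have hP0 : ∀ x ∈ V, P.eval x = 0 := by
      intro x hx
      have := hPQ x hx
      rw [hQ] at this
      simpa using this
    have hP : P = 0 := by
      by_contra hP
      exact (hVinf.mono (fun x hx => hP0 x hx)) (Polynomial.finite_setOf_isRoot hP)
    apply hu0
    funext j
    refine Fin.addCases (motive := fun j => u j = 0) (fun j₁ => ?_) (fun j₂ => ?_) j
    · have := polyOf_coeff (fun j₁ : Fin (m+1) => u (Fin.castAdd (m+1) j₁)) j₁
      rw [← hPdef, hP, coeff_zero] at this
      exact this.symm
    · have := polyOf_coeff (fun j₂ : Fin (m+1) => u (Fin.natAdd (m+1) j₂)) j₂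
      rw [← hQdef, hQ, coeff_zero] at this
      exact this.symm
  refine ⟨P, -Q, neg_ne_zero.mpr hQ0, polyOf_natDegree_le _ le_rfl, ?_, fun x hx => ?_⟩
  · rw [natDegree_neg]; exact polyOf_natDegree_le _ le_rfl
  · rw [eval_neg]
    have h := hPQ x hx
    linear_combination -h
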